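/- Let V be a right-symmetric (pre-Lie) algebra and a(z), b(z), c(z) pairwise mutually local formal distributions over V, with locality values N(a,b), N(a,c), N(b,c) (in both orders). Then for every n ∈ ℤ₊ the pair ((a₍ₙ₎b)(z), c(z)) is local, with locality value at most N(a,b) + N(a,c) + N(b,c) − n. -/
import Mathlib


variable {k V : Type*} [Field k] [CharZero k] [AddCommGroup V] [Module k V]

/-- `Σ_{s=0}^{N} (−1)^s C(N,s) x_{n−s} ∘ y_{m+s}`. -/
def locSum (mul : V →ₗ[k] V →ₗ[k] V) (x y : ℤ → V) (N : ℕ) (n m : ℤ) : V :=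
  ∑ s ∈ Finset.range (N + 1),
    ((-1) ^ s * (N.choose s) : ℤ) • mul (x (n - (s : ℤ))) (y (m + (s : ℤ)))

/-- The `n`-th product `(a₍ₙ₎b)ₘ = Σ_{s≥0} (−1)^s C(n,s) a_{n−s} ∘ b_{m+s}`. -/
def nProd (mul : V →ₗ[k] V →ₗ[k] V) (a b : ℤ → V) (n : ℕ) : ℤ → V :=
  fun m => locSum mul a b n (n : ℤ) m

namespace DongAux

section Generic

variable {W : Type*} [AddCommGroup W]

lemma swap_app {f g : Module.End ℤ W} (h : Commute f g) (w : W) : f (g w) = g (f w) := by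
  have h' := congrArg (fun E : Module.End ℤ W => E w) h.eq
  simpa only [Module.End.mul_apply] using h'

lemma neg_pow_apply (e : Module.End ℤ W) :
    ∀ (s : ℕ) (w : W), ((-e) ^ s) w = ((-1 : ℤ) ^ s) • ((e ^ s) w) := by
  intro s
  induction s with
  | zero => intro w; simp
  | succ s ih =>
    intro w
    rw [pow_succ (-e), pow_succ e, pow_succ (-1 : ℤ), Module.End.mul_apply, Module.End.mul_apply]
    have hneg : (-e) w = -(e w) := rfl
    rw [hneg, map_neg, ih, ← neg_smul]
    congr 1
    ring

lemma one_sub_pow_apply (e : Module.End ℤ W) (M : ℕ) (G : W) :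
    ((1 - e) ^ M) G
      = ∑ s ∈ Finset.range (M + 1), ((-1) ^ s * (M.choose s) : ℤ) • ((e ^ s) G) := by
  rw [sub_eq_neg_add, (Commute.one_right (-e)).add_pow, LinearMap.sum_apply]
  refine Finset.sum_congr rfl fun s hs => ?_
  rw [one_pow, mul_one, Module.End.mul_apply, Module.End.natCast_apply, map_nsmul,
    neg_pow_apply, ← Nat.cast_smul_eq_nsmul ℤ, smul_smul, mul_comm]

/-- The combinatorial core of Dong's lemma. -/
lemma core (x y z : Module.End ℤ W)
    (hxy : Commute x y) (hxz : Commute x z) (hyz : Commute y z)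
    (hrel : y = z - x + x * y) (A B C : ℕ) (v : W)
    (hzv : (z ^ C) v = 0) (hv : (x ^ A) ((y ^ B) v) = 0) :
    ∀ g al α β γ : ℕ, C - γ ≤ g → A - α ≤ al → B ≤ β → A + B + C ≤ α + β + γ →
      (x ^ α) ((y ^ β) ((z ^ γ) v)) = 0 := by
  have t1 : ∀ α β γ : ℕ, C ≤ γ → (x ^ α) ((y ^ β) ((z ^ γ) v)) = 0 := by
    intro α β γ hγ
    obtain ⟨d, rfl⟩ : ∃ d, γ = d + C := ⟨γ - C, by omega⟩
    rw [pow_add, Module.End.mul_apply, hzv, map_zero, map_zero, map_zero]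
  have t2 : ∀ α β γ : ℕ, A ≤ α → B ≤ β → (x ^ α) ((y ^ β) ((z ^ γ) v)) = 0 := by
    intro α β γ hα hβ
    obtain ⟨da, rfl⟩ : ∃ d, α = d + A := ⟨α - A, by omega⟩
    obtain ⟨db, rfl⟩ : ∃ d, β = d + B := ⟨β - B, by omega⟩
    rw [pow_add, pow_add, Module.End.mul_apply, Module.End.mul_apply,
      swap_app (hxy.pow_pow A db), swap_app (hyz.pow_pow B γ),
      swap_app (hxz.pow_pow A γ), hv, map_zero, map_zero, map_zero]
  intro g
  induction g with
  | zero =>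
    intro al α β γ hg _ _ _
    exact t1 α β γ (by omega)
  | succ g ihg =>
    intro al
    induction al with
    | zero =>
      intro α β γ hg hal hβ hsum
      by_cases hγ : C ≤ γ
      · exact t1 _ _ _ hγ
      · exact t2 _ _ _ (by omega) hβ
    | succ al iha =>
      intro α β γ hg hal hβ hsum
      by_cases hγ : C ≤ γ
      · exact t1 _ _ _ hγ
      by_cases hα : A ≤ α
      · exact t2 _ _ _ hα hβ
      push_neg at hγ hα
      obtain ⟨β', rfl⟩ : ∃ β', β = β' + 1 := ⟨β - 1, by omega⟩
      have hsucc_x : ∀ w : W, (x ^ α) (x w) = (x ^ (α + 1)) w := fun w => by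
        rw [pow_succ, Module.End.mul_apply]
      have hsucc_y : ∀ w : W, (y ^ β') (y w) = (y ^ (β' + 1)) w := fun w => by
        rw [pow_succ, Module.End.mul_apply]
      have hz1 : z ((z ^ γ) v) = (z ^ (γ + 1)) v := by
        rw [pow_succ', Module.End.mul_apply]
      have hyapp : y ((z ^ γ) v)
          = (z ^ (γ + 1)) v - x ((z ^ γ) v) + x (y ((z ^ γ) v)) := by
        conv_lhs => rw [hrel]
        rw [LinearMap.add_apply, LinearMap.sub_apply, Module.End.mul_apply, hz1]
      rw [← hsucc_y ((z ^ γ) v), hyapp, map_add, map_sub, map_add, map_sub,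
        swap_app (hxy.symm.pow_left β') ((z ^ γ) v),
        swap_app (hxy.symm.pow_left β') (y ((z ^ γ) v)),
        hsucc_x, hsucc_x, hsucc_y,
        ihg (A - α) α β' (γ + 1) (by omega) (by omega) (by omega) (by omega),
        iha (α + 1) β' γ (by omega) (by omega) (by omega) (by omega),
        iha (α + 1) (β' + 1) γ (by omega) (by omega) (by omega) (by omega)]
      simp

end Generic

section Shifts

variable (V)

/-- Shift operator on two-index families. -/
def sh2 : Module.End ℤ (ℤ → ℤ → V) where
  toFun G := fun n m => G (n - 1) (m + 1)
  map_add' _ _ := rfl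
  map_smul' _ _ := rfl

/-- Shift on slots 1,2 of a three-index family. -/
def sh3a : Module.End ℤ (ℤ → ℤ → ℤ → V) where
  toFun G := fun i j l => G (i - 1) (j + 1) l
  map_add' _ _ := rfl
  map_smul' _ _ := rfl

/-- Shift on slots 2,3 of a three-index family. -/
def sh3c : Module.End ℤ (ℤ → ℤ → ℤ → V) where
  toFun G := fun i j l => G i (j - 1) (l + 1)
  map_add' _ _ := rfl
  map_smul' _ _ := rfl

variable {V}

lemma sh2_pow (s : ℕ) (G : ℤ → ℤ → V) (n m : ℤ) :
    ((sh2 V ^ s) G) n m = G (n - s) (m + s) := by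
  induction s generalizing n m with
  | zero => simp
  | succ s ih =>
    rw [pow_succ', Module.End.mul_apply]
    show ((sh2 V ^ s) G) (n - 1) (m + 1) = _
    rw [ih]
    push_cast
    have h1 : n - 1 - (s : ℤ) = n - ((s : ℤ) + 1) := by ring
    have h2 : m + 1 + (s : ℤ) = m + ((s : ℤ) + 1) := by ring
    rw [h1, h2]

lemma sh3a_pow (s : ℕ) (G : ℤ → ℤ → ℤ → V) (i j l : ℤ) :
    ((sh3a V ^ s) G) i j l = G (i - s) (j + s) l := by
  induction s generalizing i j l with
  | zero => simp
  | succ s ih =>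
    rw [pow_succ', Module.End.mul_apply]
    show ((sh3a V ^ s) G) (i - 1) (j + 1) l = _
    rw [ih]
    push_cast
    have h1 : i - 1 - (s : ℤ) = i - ((s : ℤ) + 1) := by ring
    have h2 : j + 1 + (s : ℤ) = j + ((s : ℤ) + 1) := by ring
    rw [h1, h2]

lemma sh3c_pow (s : ℕ) (G : ℤ → ℤ → ℤ → V) (i j l : ℤ) :
    ((sh3c V ^ s) G) i j l = G i (j - s) (l + s) := by
  induction s generalizing i j l with
  | zero => simp
  | succ s ih =>
    rw [pow_succ', Module.End.mul_apply]
    show ((sh3c V ^ s) G) i (j - 1) (l + 1) = _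
    rw [ih]
    push_cast
    have h1 : j - 1 - (s : ℤ) = j - ((s : ℤ) + 1) := by ring
    have h2 : l + 1 + (s : ℤ) = l + ((s : ℤ) + 1) := by ring
    rw [h1, h2]

lemma comm3 : Commute (sh3a V) (sh3c V) := by
  apply LinearMap.ext
  intro G
  funext i j l
  show G (i - 1) (j + 1 - 1) (l + 1) = G (i - 1) (j - 1 + 1) (l + 1)
  norm_num

lemma sh3ac_pow (s : ℕ) (G : ℤ → ℤ → ℤ → V) (i j l : ℤ) :
    (((sh3a V * sh3c V) ^ s) G) i j l = G (i - s) j (l + s) := by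
  rw [(comm3 (V := V)).mul_pow, Module.End.mul_apply, sh3a_pow, sh3c_pow]
  congr 1
  omega

end Shifts

section Loc

variable (mul : V →ₗ[k] V →ₗ[k] V) (a b c : ℤ → V)

lemma locSum_eq_op (u v : ℤ → V) (M : ℕ) (i j : ℤ) :
    locSum mul u v M i j = (((1 - sh2 V) ^ M) (fun n m => mul (u n) (v m))) i j := by
  simp only [one_sub_pow_apply, Finset.sum_apply, Pi.smul_apply, sh2_pow, locSum]

lemma loc_mono (u v : ℤ → V) {M M' : ℕ} (hle : M ≤ M')
    (h : ∀ i j : ℤ, locSum mul u v M i j = 0) :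
    ∀ i j : ℤ, locSum mul u v M' i j = 0 := by
  have hK : ((1 - sh2 V) ^ M) (fun n m => mul (u n) (v m)) = 0 := by
    funext i j
    rw [← locSum_eq_op]
    exact h i j
  intro i j
  obtain ⟨d, rfl⟩ : ∃ d, M' = d + M := ⟨M' - M, by omega⟩
  rw [locSum_eq_op, pow_add, Module.End.mul_apply, hK, map_zero]
  rfl

lemma loc_rev (u v : ℤ → V) (M : ℕ) (h : ∀ i j : ℤ, locSum mul u v M i j = 0)
    (n m : ℤ) :
    ∑ s ∈ Finset.range (M + 1),
      ((-1) ^ s * (M.choose s) : ℤ) • mul (u (n + (s : ℤ))) (v (m - (s : ℤ))) = 0 := by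
  have h0 := h (n + M) (m - M)
  rw [locSum] at h0
  set f : ℕ → V := fun s =>
    ((-1) ^ s * (M.choose s) : ℤ) • mul (u (n + (M : ℤ) - (s : ℤ))) (v (m - (M : ℤ) + (s : ℤ)))
    with hf
  have h0' : ∑ s ∈ Finset.range (M + 1), f s = 0 := h0
  have hrefl : ∑ s ∈ Finset.range (M + 1), f (M - s) = 0 := by
    have := Finset.sum_range_reflect f (M + 1)
    simpa using this.trans h0'
  have key : ∑ s ∈ Finset.range (M + 1),
      ((-1) ^ s * (M.choose s) : ℤ) • mul (u (n + (s : ℤ))) (v (m - (s : ℤ)))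
      = (-1 : ℤ) ^ M • ∑ s ∈ Finset.range (M + 1), f (M - s) := by
    rw [Finset.smul_sum]
    refine Finset.sum_congr rfl fun s hs => ?_
    have hsM : s ≤ M := Nat.lt_succ_iff.mp (Finset.mem_range.mp hs)
    rw [hf]
    simp only
    rw [Nat.choose_symm hsM, smul_smul]
    have hc1 : n + (M : ℤ) - ((M - s : ℕ) : ℤ) = n + (s : ℤ) := by
      rw [Nat.cast_sub hsM]; ring
    have hc2 : m - (M : ℤ) + ((M - s : ℕ) : ℤ) = m - (s : ℤ) := by
      rw [Nat.cast_sub hsM]; ring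
    rw [hc1, hc2]
    congr 1
    have hsq : (-1 : ℤ) ^ (M - s) * (-1 : ℤ) ^ (M - s) = 1 := by
      rw [← pow_add]
      exact Even.neg_one_pow ⟨M - s, rfl⟩
    have hMs : (-1 : ℤ) ^ M = (-1 : ℤ) ^ (M - s) * (-1 : ℤ) ^ s := by
      rw [← pow_add]
      congr 1
      omega
    calc (-1 : ℤ) ^ s * (M.choose s : ℤ)
        = ((-1 : ℤ) ^ (M - s) * (-1 : ℤ) ^ (M - s)) * ((-1 : ℤ) ^ s * (M.choose s : ℤ)) := by
          rw [hsq, one_mul]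
      _ = (-1 : ℤ) ^ M * ((-1 : ℤ) ^ (M - s) * (M.choose s : ℤ)) := by
          rw [hMs]; ring
  rw [key, hrefl, smul_zero]

/-- `F(i,j,l) = (aᵢ ∘ bⱼ) ∘ c_l`. -/
def Fd : ℤ → ℤ → ℤ → V := fun i j l => mul (mul (a i) (b j)) (c l)

/-- `G1(i,j,l) = (aᵢ ∘ c_l) ∘ bⱼ`. -/
def G1d : ℤ → ℤ → ℤ → V := fun i j l => mul (mul (a i) (c l)) (b j)

/-- `H(i,j,l) = aᵢ ∘ (bⱼ ∘ c_l) − aᵢ ∘ (c_l ∘ bⱼ)`. -/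
def Hd : ℤ → ℤ → ℤ → V := fun i j l =>
  mul (a i) (mul (b j) (c l)) - mul (a i) (mul (c l) (b j))

lemma FGH (rsym : ∀ x y z : V,
      mul (mul x y) z - mul x (mul y z) = mul (mul x z) y - mul x (mul z y)) :
    Fd mul a b c = G1d mul a b c + Hd mul a b c := by
  funext i j l
  simp only [Fd, G1d, Hd, Pi.add_apply]
  have h := rsym (a i) (b j) (c l)
  have h3 : mul (mul (a i) (b j)) (c l)
      = mul (mul (a i) (c l)) (b j) - mul (a i) (mul (c l) (b j))
        + mul (a i) (mul (b j) (c l)) := by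
    rw [← h]; abel
  rw [h3]; abel

lemma hF_op (A : ℕ) (hab : ∀ n m : ℤ, locSum mul a b A n m = 0) :
    ((1 - sh3a V) ^ A) (Fd mul a b c) = 0 := by
  funext i j l
  rw [one_sub_pow_apply]
  simp only [Finset.sum_apply, Pi.smul_apply, sh3a_pow, Pi.zero_apply]
  have key : (∑ s ∈ Finset.range (A + 1),
      ((-1) ^ s * (A.choose s) : ℤ) • Fd mul a b c (i - (s : ℤ)) (j + (s : ℤ)) l)
      = mul.flip (c l) (locSum mul a b A i j) := by
    rw [locSum, map_sum]
    refine Finset.sum_congr rfl fun s _ => ?_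
    rw [map_zsmul]
    rfl
  rw [key, hab, map_zero]

lemma hG1_op (C : ℕ) (hac : ∀ n m : ℤ, locSum mul a c C n m = 0) :
    ((1 - sh3a V * sh3c V) ^ C) (G1d mul a b c) = 0 := by
  funext i j l
  rw [one_sub_pow_apply]
  simp only [Finset.sum_apply, Pi.smul_apply, sh3ac_pow, Pi.zero_apply]
  have key : (∑ s ∈ Finset.range (C + 1),
      ((-1) ^ s * (C.choose s) : ℤ) • G1d mul a b c (i - (s : ℤ)) j (l + (s : ℤ)))
      = mul.flip (b j) (locSum mul a c C i l) := by
    rw [locSum, map_sum]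
    refine Finset.sum_congr rfl fun s _ => ?_
    rw [map_zsmul]
    rfl
  rw [key, hac, map_zero]

lemma hH_op (B : ℕ) (hbc : ∀ n m : ℤ, locSum mul b c B n m = 0)
    (hcb : ∀ n m : ℤ, locSum mul c b B n m = 0) :
    ((1 - sh3c V) ^ B) (Hd mul a b c) = 0 := by
  funext i j l
  rw [one_sub_pow_apply]
  simp only [Finset.sum_apply, Pi.smul_apply, sh3c_pow, Pi.zero_apply, Hd, smul_sub,
    Finset.sum_sub_distrib]
  have hS1 : (∑ s ∈ Finset.range (B + 1),
      ((-1) ^ s * (B.choose s) : ℤ) • mul (a i) (mul (b (j - (s : ℤ))) (c (l + (s : ℤ))))) = 0 := by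
    have key : (∑ s ∈ Finset.range (B + 1),
        ((-1) ^ s * (B.choose s) : ℤ) • mul (a i) (mul (b (j - (s : ℤ))) (c (l + (s : ℤ)))))
        = mul (a i) (locSum mul b c B j l) := by
      rw [locSum, map_sum]
      exact Finset.sum_congr rfl fun s _ => (map_zsmul (mul (a i)) _ _).symm
    rw [key, hbc, map_zero]
  have hS2 : (∑ s ∈ Finset.range (B + 1),
      ((-1) ^ s * (B.choose s) : ℤ) • mul (a i) (mul (c (l + (s : ℤ))) (b (j - (s : ℤ))))) = 0 := by
    have key : (∑ s ∈ Finset.range (B + 1),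
        ((-1) ^ s * (B.choose s) : ℤ) • mul (a i) (mul (c (l + (s : ℤ))) (b (j - (s : ℤ)))))
        = mul (a i) (∑ s ∈ Finset.range (B + 1),
            ((-1) ^ s * (B.choose s) : ℤ) • mul (c (l + (s : ℤ))) (b (j - (s : ℤ)))) := by
      rw [map_sum]
      exact Finset.sum_congr rfl fun s _ => (map_zsmul (mul (a i)) _ _).symm
    rw [key, loc_rev mul c b B hcb l j, map_zero]
  rw [hS1, hS2, sub_zero]

lemma bridge (n M : ℕ) (p q : ℤ) :
    locSum mul (nProd mul a b n) c M p q
      = (((1 - sh3c V) ^ M) (((1 - sh3a V) ^ n) (Fd mul a b c))) n p q := by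
  rw [one_sub_pow_apply]
  simp only [Finset.sum_apply, Pi.smul_apply, sh3c_pow]
  rw [locSum]
  refine Finset.sum_congr rfl fun t ht => ?_
  congr 1
  rw [one_sub_pow_apply]
  simp only [Finset.sum_apply, Pi.smul_apply, sh3a_pow]
  simp only [nProd, locSum]
  rw [map_sum, LinearMap.sum_apply]
  refine Finset.sum_congr rfl fun s _ => ?_
  rw [map_zsmul, LinearMap.smul_apply]
  rfl

end Loc

end DongAux

/-- Let `V` be a right-symmetric (pre-Lie) algebra and `a(z), b(z), c(z)` pairwise
mutually local formal distributions over `V`, with locality values bounded by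
`Nab, Nac, Nbc` (in both orders). Then for every `n ∈ ℤ₊` the pair `((a₍ₙ₎b)(z), c(z))`
is local with locality value at most `Nab + Nac + Nbc − n`. -/
theorem stmt_13 (mul : V →ₗ[k] V →ₗ[k] V)
    (rsym : ∀ x y z : V,
      mul (mul x y) z - mul x (mul y z) = mul (mul x z) y - mul x (mul z y))
    (a b c : ℤ → V) (Nab Nac Nbc : ℕ)
    (hab : ∀ n m : ℤ, locSum mul a b Nab n m = 0)
    (hba : ∀ n m : ℤ, locSum mul b a Nab n m = 0)
    (hac : ∀ n m : ℤ, locSum mul a c Nac n m = 0)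
    (hca : ∀ n m : ℤ, locSum mul c a Nac n m = 0)
    (hbc : ∀ n m : ℤ, locSum mul b c Nbc n m = 0)
    (hcb : ∀ n m : ℤ, locSum mul c b Nbc n m = 0) :
    ∀ n : ℕ, ∀ p q : ℤ, locSum mul (nProd mul a b n) c (Nab + Nac + Nbc - n) p q = 0 := by
  intro n p q
  by_cases hn : Nab ≤ n
  · -- `a₍ₙ₎b = 0` since locality is inherited by larger orders
    have h0 : ∀ m : ℤ, nProd mul a b n m = 0 := fun m => by
      rw [nProd]
      exact DongAux.loc_mono mul a b hn hab (n : ℤ) m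
    rw [locSum]
    refine Finset.sum_eq_zero fun s _ => ?_
    rw [h0, map_zero, LinearMap.zero_apply, smul_zero]
  · push_neg at hn
    rw [DongAux.bridge]
    suffices hkey : ((1 - DongAux.sh3c V) ^ (Nab + Nac + Nbc - n))
        (((1 - DongAux.sh3a V) ^ n) (DongAux.Fd mul a b c)) = 0 by
      rw [hkey]; rfl
    have h13 : Commute (DongAux.sh3a V) (DongAux.sh3c V) := DongAux.comm3
    have hxy : Commute (1 - DongAux.sh3a V) (1 - DongAux.sh3c V) :=
      Commute.sub_left (Commute.one_left _) ((Commute.one_right _).sub_right h13)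
    have hxz : Commute (1 - DongAux.sh3a V) (1 - DongAux.sh3a V * DongAux.sh3c V) :=
      Commute.sub_left (Commute.one_left _)
        ((Commute.one_right _).sub_right ((Commute.refl _).mul_right h13))
    have hyz : Commute (1 - DongAux.sh3c V) (1 - DongAux.sh3a V * DongAux.sh3c V) :=
      Commute.sub_left (Commute.one_left _)
        ((Commute.one_right _).sub_right (h13.symm.mul_right (Commute.refl _)))
    have hrel : (1 - DongAux.sh3c V)
        = (1 - DongAux.sh3a V * DongAux.sh3c V) - (1 - DongAux.sh3a V)
          + (1 - DongAux.sh3a V) * (1 - DongAux.sh3c V) := by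
      noncomm_ring
    have hFG := DongAux.FGH mul a b c rsym
    have hxA := DongAux.hF_op mul a b c Nab hab
    have hyB := DongAux.hH_op mul a b c Nbc hbc hcb
    have hzC := DongAux.hG1_op mul a b c Nac hac
    have hG1eq : DongAux.G1d mul a b c = DongAux.Fd mul a b c - DongAux.Hd mul a b c := by
      rw [hFG]; abel
    have hv : ((1 - DongAux.sh3a V) ^ Nab)
        (((1 - DongAux.sh3c V) ^ Nbc) (DongAux.G1d mul a b c)) = 0 := by
      rw [hG1eq, map_sub, map_sub, DongAux.swap_app (hxy.pow_pow Nab Nbc), hxA, hyB,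
        map_zero, map_zero, sub_zero]
    have hcore := DongAux.core (1 - DongAux.sh3a V) (1 - DongAux.sh3c V)
      (1 - DongAux.sh3a V * DongAux.sh3c V) hxy hxz hyz hrel Nab Nbc Nac
      (DongAux.G1d mul a b c) hzC hv Nac Nab n (Nab + Nac + Nbc - n) 0
      (by omega) (by omega) (by omega) (by omega)
    rw [pow_zero, Module.End.one_apply] at hcore
    rw [hFG, map_add, map_add,
      DongAux.swap_app (hxy.symm.pow_pow (Nab + Nac + Nbc - n) n) (DongAux.G1d mul a b c),
      DongAux.swap_app (hxy.symm.pow_pow (Nab + Nac + Nbc - n) n) (DongAux.Hd mul a b c),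
      hcore]
    obtain ⟨d, hd⟩ : ∃ d, Nab + Nac + Nbc - n = d + Nbc := ⟨Nab + Nac - n, by omega⟩
    rw [hd, pow_add, Module.End.mul_apply, hyB, map_zero, map_zero, zero_add]
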